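/- Let r₁, r₂, r₃ be positive reals with r₂ > max(r₁, r₃) and let L₀ = (π/2)·√((2r₂ - r₁ - r₃)/((r₂-r₁)(r₂-r₃))). Then λ₁ := -(r₂² - r₁r₃)/(2r₂ - r₁ - r₃) satisfies: (i) -r₂ < λ₁ < -max(r₁,r₃); (ii) L₀√(r₂+λ₁) = π/2; (iii) r₂ + λ₁ = √((r₁+λ₁)(r₃+λ₁)); and consequently λ₁ solves the equation cot(L₀√(r₂+λ₁)) = (r₂+λ₁ - √((r₁+λ₁)(r₃+λ₁)))/(√(r₂+λ₁)(√(-r₁-λ₁)+√(-r₃-λ₁))). -/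

import Mathlib

open Real

theorem explicit_eigenvalue (r₁ r₂ r₃ : ℝ)
    (h1 : 0 < r₁) (h3 : 0 < r₃) (h2 : max r₁ r₃ < r₂)
    (L₀ lam1 : ℝ)
    (hL₀ : L₀ = (Real.pi / 2) * Real.sqrt ((2 * r₂ - r₁ - r₃) / ((r₂ - r₁) * (r₂ - r₃))))
    (hlam1 : lam1 = -((r₂ ^ 2 - r₁ * r₃) / (2 * r₂ - r₁ - r₃))) :
    (-r₂ < lam1 ∧ lam1 < -(max r₁ r₃)) ∧
      L₀ * Real.sqrt (r₂ + lam1) = Real.pi / 2 ∧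
      r₂ + lam1 = Real.sqrt ((r₁ + lam1) * (r₃ + lam1)) ∧
      Real.cot (L₀ * Real.sqrt (r₂ + lam1))
        = (r₂ + lam1 - Real.sqrt ((r₁ + lam1) * (r₃ + lam1)))
          / (Real.sqrt (r₂ + lam1) * (Real.sqrt (-r₁ - lam1) + Real.sqrt (-r₃ - lam1))) := by
  have ha : 0 < r₂ - r₁ := sub_pos.mpr ((le_max_left r₁ r₃).trans_lt h2)
  have hb : 0 < r₂ - r₃ := sub_pos.mpr ((le_max_right r₁ r₃).trans_lt h2)
  have hD : 0 < 2 * r₂ - r₁ - r₃ := by linarith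
  have hDne : (2 * r₂ - r₁ - r₃) ≠ 0 := ne_of_gt hD
  have h2l : r₂ + lam1 = (r₂ - r₁) * (r₂ - r₃) / (2 * r₂ - r₁ - r₃) := by
    rw [hlam1, eq_div_iff hDne, add_mul, neg_mul, div_mul_cancel₀ _ hDne]; ring
  have h1l : r₁ + lam1 = -((r₂ - r₁) ^ 2 / (2 * r₂ - r₁ - r₃)) := by
    rw [hlam1, ← neg_div, ← neg_div, eq_div_iff hDne, add_mul, div_mul_cancel₀ _ hDne]; ring
  have h3l : r₃ + lam1 = -((r₂ - r₃) ^ 2 / (2 * r₂ - r₁ - r₃)) := by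
    rw [hlam1, ← neg_div, ← neg_div, eq_div_iff hDne, add_mul, div_mul_cancel₀ _ hDne]; ring
  have h2pos : 0 < r₂ + lam1 := by
    rw [h2l]; positivity
  have hi : -r₂ < lam1 ∧ lam1 < -(max r₁ r₃) := by
    constructor
    · linarith
    · have p1 : 0 < (r₂ - r₁) ^ 2 / (2 * r₂ - r₁ - r₃) := by positivity
      have p3 : 0 < (r₂ - r₃) ^ 2 / (2 * r₂ - r₁ - r₃) := by positivity
      rw [lt_neg]
      exact max_lt (by linarith) (by linarith)
  have hiii : r₂ + lam1 = Real.sqrt ((r₁ + lam1) * (r₃ + lam1)) := by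
    have : (r₁ + lam1) * (r₃ + lam1) = (r₂ + lam1) ^ 2 := by
      rw [h1l, h3l, h2l]; field_simp
    rw [this, Real.sqrt_sq h2pos.le]
  have hii : L₀ * Real.sqrt (r₂ + lam1) = Real.pi / 2 := by
    rw [hL₀, h2l, mul_assoc, ← Real.sqrt_mul (by positivity)]
    have : (2 * r₂ - r₁ - r₃) / ((r₂ - r₁) * (r₂ - r₃)) *
        ((r₂ - r₁) * (r₂ - r₃) / (2 * r₂ - r₁ - r₃)) = 1 := by
      field_simp
    rw [this, Real.sqrt_one, mul_one]
  refine ⟨hi, hii, hiii, ?_⟩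
  rw [hii, Real.cot_eq_cos_div_sin, Real.cos_pi_div_two, zero_div, ← hiii,
    sub_self, zero_div]
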